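/- Let C be a nonempty closed convex subset of a Hilbert space H, let P_C be the metric projection onto C, and let A : C → H be relaxed (γ, r)-cocoercive and μ-Lipschitz with μ > 0 and r > γμ². Then for 0 < s < 2(r − γμ²)/μ², the map x ↦ P_C(x − sAx) is a contraction from C to C. -/

import Mathlib

open RealInnerProductSpace

theorem stmt_3 {H : Type*} [NormedAddCommGroup H] [InnerProductSpace ℝ H]
    (C : Set H) (hC : C.Nonempty) (hCc : IsClosed C) (hCconv : Convex ℝ C)
    (P : H → H) (hP : ∀ x : H, P x ∈ C ∧ ∀ y ∈ C, ‖x - P x‖ ≤ ‖x - y‖)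
    (A : H → H) (γ r μ : ℝ)
    (hγ : 0 < γ) (hr : 0 < r) (hμ : 0 < μ) (hrγμ : r > γ * μ ^ 2)
    (hcoco : ∀ x ∈ C, ∀ y ∈ C, ⟪A x - A y, x - y⟫ ≥ -γ * ‖A x - A y‖ ^ 2 + r * ‖x - y‖ ^ 2)
    (hlip : ∀ x ∈ C, ∀ y ∈ C, ‖A x - A y‖ ≤ μ * ‖x - y‖)
    (s : ℝ) (hs0 : 0 < s) (hs1 : s < 2 * (r - γ * μ ^ 2) / μ ^ 2) :
    (∀ x ∈ C, P (x - s • A x) ∈ C) ∧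
      ∃ k : ℝ, 0 ≤ k ∧ k < 1 ∧
        ∀ x ∈ C, ∀ y ∈ C, ‖P (x - s • A x) - P (y - s • A y)‖ ≤ k * ‖x - y‖ := by
  -- variational inequality for P
  have hvar : ∀ u : H, ∀ w ∈ C, ⟪u - P u, w - P u⟫ ≤ 0 := by
    intro u w hw
    have hPu : P u ∈ C := (hP u).1
    have heq : ‖u - P u‖ = ⨅ w : C, ‖u - w‖ := by
      haveI : Nonempty C := hC.to_subtype
      refine le_antisymm (le_ciInf fun w => (hP u).2 w w.2) ?_
      exact ciInf_le ⟨0, fun _ ⟨_, h⟩ => h ▸ norm_nonneg _⟩ (⟨P u, hPu⟩ : C)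
    exact (norm_eq_iInf_iff_real_inner_le_zero hCconv hPu).1 heq w hw
  -- nonexpansiveness of P
  have hnon : ∀ u v : H, ‖P u - P v‖ ≤ ‖u - v‖ := by
    intro u v
    have h1 := hvar u (P v) (hP v).1
    have h2 := hvar v (P u) (hP u).1
    have key : ‖P u - P v‖ ^ 2 ≤ ⟪u - v, P u - P v⟫ := by
      have e1 : ⟪u - v, P u - P v⟫ =
          ‖P u - P v‖ ^ 2 + (-⟪u - P u, P v - P u⟫) + (-⟪v - P v, P u - P v⟫) := by
        rw [← real_inner_self_eq_norm_sq]
        simp only [inner_sub_left, inner_sub_right]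
        ring
      nlinarith [h1, h2]
    have hcs := real_inner_le_norm (u - v) (P u - P v)
    nlinarith [norm_nonneg (P u - P v), norm_nonneg (u - v), key, hcs]
  refine ⟨fun x _ => (hP _).1, ?_⟩
  set θ : ℝ := 1 - 2 * s * r + 2 * s * γ * μ ^ 2 + s ^ 2 * μ ^ 2 with hθ
  have hθ1 : θ < 1 := by
    have h : s * μ ^ 2 < 2 * (r - γ * μ ^ 2) := by
      have := (lt_div_iff₀ (by positivity : (0:ℝ) < μ ^ 2)).mp hs1
      linarith
    nlinarith
  refine ⟨Real.sqrt (max θ 0), Real.sqrt_nonneg _, ?_, ?_⟩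
  · have hm : max θ 0 < 1 := max_lt hθ1 one_pos
    calc Real.sqrt (max θ 0) < Real.sqrt 1 := by
          exact Real.sqrt_lt_sqrt (le_max_right _ _) hm
      _ = 1 := Real.sqrt_one
  · intro x hx y hy
    set a := ‖x - y‖
    set b := ‖A x - A y‖
    have hb : b ≤ μ * a := hlip x hx y hy
    have hco := hcoco x hx y hy
    have ha0 : 0 ≤ a := norm_nonneg _
    have hb0 : 0 ≤ b := norm_nonneg _
    have hdiff : (x - s • A x) - (y - s • A y) = (x - y) - s • (A x - A y) := by
      rw [smul_sub]; abel
    have hsq : ‖(x - s • A x) - (y - s • A y)‖ ^ 2 ≤ θ * a ^ 2 := by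
      rw [hdiff]
      have e : ‖(x - y) - s • (A x - A y)‖ ^ 2 =
          a ^ 2 - 2 * (s * ⟪A x - A y, x - y⟫) + s ^ 2 * b ^ 2 := by
        rw [norm_sub_sq_real, norm_smul, real_inner_smul_right, real_inner_comm]
        simp [abs_of_pos hs0, mul_pow]
        rfl
      rw [e]
      have hb2 : b ^ 2 ≤ μ ^ 2 * a ^ 2 := by nlinarith
      nlinarith [hs0.le, mul_nonneg hs0.le hγ.le]
    have h1 : ‖P (x - s • A x) - P (y - s • A y)‖ ^ 2 ≤ (Real.sqrt (max θ 0) * a) ^ 2 := by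
      have h2 : ‖(x - s • A x) - (y - s • A y)‖ ^ 2 ≤ max θ 0 * a ^ 2 := by
        calc ‖(x - s • A x) - (y - s • A y)‖ ^ 2 ≤ θ * a ^ 2 := hsq
          _ ≤ max θ 0 * a ^ 2 := by nlinarith [le_max_left θ 0, sq_nonneg a]
      have h3 := hnon (x - s • A x) (y - s • A y)
      have h4 : (Real.sqrt (max θ 0) * a) ^ 2 = max θ 0 * a ^ 2 := by
        rw [mul_pow, Real.sq_sqrt (le_max_right _ _)]
      nlinarith [norm_nonneg ((x - s • A x) - (y - s • A y)),
        norm_nonneg (P (x - s • A x) - P (y - s • A y))]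
    have hk0 : 0 ≤ Real.sqrt (max θ 0) * a := mul_nonneg (Real.sqrt_nonneg _) ha0
    nlinarith [norm_nonneg (P (x - s • A x) - P (y - s • A y))]
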